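/- Let G be a connected graph and let G′ be the graph obtained from G by deleting all of its bridges. If x and y are two vertices lying in the same connected component C of G′, then the distance between x and y within C equals their distance in G; in particular, the diameter of every component of G′ is at most the diameter of G. -/

import Mathlib

open SimpleGraph

private lemma walk_avoid_bridges {V : Type*} (G : SimpleGraph V) :
    ∀ (n : ℕ) {x y : V} (p : G.Walk x y), p.length ≤ n →
      (G.deleteEdges {e | G.IsBridge e}).Reachable x y →
      ∃ q : (G.deleteEdges {e | G.IsBridge e}).Walk x y, q.length ≤ p.length := by
  intro n
  classical
  induction n with
  | zero =>
    intro x y p hp _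
    cases p with
    | nil => exact ⟨SimpleGraph.Walk.nil, le_rfl⟩
    | cons h q => simp [SimpleGraph.Walk.length_cons] at hp
  | succ n ih =>
    intro x y p hp hxy
    cases p with
    | nil => exact ⟨SimpleGraph.Walk.nil, le_rfl⟩
    | @cons _ z _ h q =>
      by_cases hb : G.IsBridge s(x, z)
      · -- the edge s(x,z) must appear in q, so we can skip ahead to x
        have hmem : s(x, z) ∈ q.edges := by
          by_contra hne
          have q' := q.toDeleteEdges {s(x, z)} (fun e he => by
            simp only [Set.mem_singleton_iff]
            intro hee; exact hne (hee ▸ he))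
          have hzy : (G.deleteEdges {s(x, z)}).Reachable z y := ⟨q'⟩
          have hle : G.deleteEdges {e | G.IsBridge e} ≤ G.deleteEdges {s(x, z)} :=
            SimpleGraph.deleteEdges_anti (by
              intro e he
              simp only [Set.mem_singleton_iff] at he
              simpa [he] using hb)
          have hxy' : (G.deleteEdges {s(x, z)}).Reachable x y := hxy.mono hle
          have hxz : (G.deleteEdges {s(x, z)}).Reachable x z := hxy'.trans hzy.symm
          exact (SimpleGraph.isBridge_iff.mp hb) hxz
        have hxs : x ∈ q.support := q.fst_mem_support_of_mem_edges hmem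
        have hlen : (q.dropUntil x hxs).length ≤ n := by
          have h1 := q.length_dropUntil_le hxs
          have h2 : q.length ≤ n := by
            simpa [SimpleGraph.Walk.length_cons] using hp
          omega
        obtain ⟨q', hq'⟩ := ih (q.dropUntil x hxs) hlen hxy
        refine ⟨q', ?_⟩
        have := q.length_dropUntil_le hxs
        simp only [SimpleGraph.Walk.length_cons]
        omega
      · have hadj : (G.deleteEdges {e | G.IsBridge e}).Adj x z := by
          simp only [SimpleGraph.deleteEdges_adj, Set.mem_setOf_eq]
          exact ⟨h, hb⟩
        have hzy : (G.deleteEdges {e | G.IsBridge e}).Reachable z y :=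
          (hadj.reachable).symm.trans hxy
        have hq : q.length ≤ n := by simpa [SimpleGraph.Walk.length_cons] using hp
        obtain ⟨q', hq'⟩ := ih q hq hzy
        exact ⟨SimpleGraph.Walk.cons hadj q', by
          simp only [SimpleGraph.Walk.length_cons]; omega⟩

private lemma walk_to_induce {V : Type*} (H : SimpleGraph V) (s : Set V) :
    ∀ {a b : V} (p : H.Walk a b) (ha : a ∈ s) (hb : b ∈ s),
      (∀ w ∈ p.support, w ∈ s) →
      ∃ q : (H.induce s).Walk ⟨a, ha⟩ ⟨b, hb⟩, q.length = p.length := by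
  intro a b p
  induction p with
  | nil => intro ha hb _; exact ⟨SimpleGraph.Walk.nil, rfl⟩
  | @cons u v w h q ih =>
    intro ha hb hs
    have hv : v ∈ s := hs v (by simp)
    obtain ⟨q', hq'⟩ := ih hv hb (fun x hx => hs x (by simp [hx]))
    exact ⟨SimpleGraph.Walk.cons (by exact h : (H.induce s).Adj ⟨u, ha⟩ ⟨v, hv⟩) q',
      by exact congrArg (· + 1) hq'⟩

/-- Let `G'` be the graph obtained from a connected graph `G` by deleting all bridges.
If `x` and `y` lie in the same connected component of `G'`, then their distance within
that component (equivalently, in `G'`) equals their distance in `G`; in particular the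
diameter of every component of `G'` is at most the diameter of `G`. -/
theorem dist_eq_after_deleting_bridges {V : Type*} [Fintype V] (G : SimpleGraph V)
    (hG : G.Connected) :
    (∀ x y : V,
      (G.deleteEdges {e | G.IsBridge e}).connectedComponentMk x =
        (G.deleteEdges {e | G.IsBridge e}).connectedComponentMk y →
      (G.deleteEdges {e | G.IsBridge e}).dist x y = G.dist x y) ∧
    (∀ C : (G.deleteEdges {e | G.IsBridge e}).ConnectedComponent,
      ((G.deleteEdges {e | G.IsBridge e}).induce C.supp).diam ≤ G.diam) := by
  set G' := G.deleteEdges {e | G.IsBridge e} with hG'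
  have hle : G' ≤ G := SimpleGraph.deleteEdges_le _
  have key : ∀ x y : V, G'.connectedComponentMk x = G'.connectedComponentMk y →
      G'.dist x y = G.dist x y := by
    intro x y hxy
    classical
    have hr' : G'.Reachable x y := SimpleGraph.ConnectedComponent.eq.mp hxy
    have hr : G.Reachable x y := hr'.mono hle
    apply le_antisymm
    · obtain ⟨p, hp⟩ := hr.exists_walk_length_eq_dist
      obtain ⟨q, hq⟩ := walk_avoid_bridges G p.length p le_rfl hr'
      calc G'.dist x y ≤ q.length := SimpleGraph.dist_le q
        _ ≤ p.length := hq
        _ = G.dist x y := hp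
    · obtain ⟨q, hq⟩ := hr'.exists_walk_length_eq_dist
      calc G.dist x y ≤ (q.mapLe hle).length := SimpleGraph.dist_le _
        _ = q.length := SimpleGraph.Walk.length_map _ _
        _ = G'.dist x y := hq
  refine ⟨key, ?_⟩
  intro C
  classical
  haveI : Nonempty V := hG.nonempty
  have hnetop : G.ediam ≠ ⊤ := by
    obtain ⟨u, v, huv⟩ := SimpleGraph.exists_edist_eq_ediam_of_finite (G := G)
    rw [← huv]
    exact SimpleGraph.edist_ne_top_iff_reachable.mpr (hG u v)
  have hediam : (G'.induce C.supp).ediam ≤ G.ediam := by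
    apply SimpleGraph.ediam_le_of_edist_le
    rintro ⟨u, hu⟩ ⟨v, hv⟩
    rw [SimpleGraph.ConnectedComponent.mem_supp_iff] at hu hv
    have hr' : G'.Reachable u v :=
      SimpleGraph.ConnectedComponent.eq.mp (hu.trans hv.symm)
    obtain ⟨q, hq⟩ := hr'.exists_walk_length_eq_dist
    have hsupp : ∀ w ∈ q.support, w ∈ C.supp := by
      intro w hw
      have : G'.Reachable u w := ⟨q.takeUntil w hw⟩
      rw [SimpleGraph.ConnectedComponent.mem_supp_iff, ← hu]
      exact SimpleGraph.ConnectedComponent.eq.mpr this.symm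
    have hu' : u ∈ C.supp := by rw [SimpleGraph.ConnectedComponent.mem_supp_iff]; exact hu
    have hv' : v ∈ C.supp := by rw [SimpleGraph.ConnectedComponent.mem_supp_iff]; exact hv
    obtain ⟨q', hq'⟩ := walk_to_induce G' C.supp q hu' hv' hsupp
    calc (G'.induce C.supp).edist ⟨u, hu'⟩ ⟨v, hv'⟩ ≤ q'.length := SimpleGraph.edist_le q'
      _ = (q.length : ℕ∞) := by exact_mod_cast hq'
      _ = (G'.dist u v : ℕ∞) := by exact_mod_cast hq
      _ = (G.dist u v : ℕ∞) := by rw [key u v (hu.trans hv.symm)]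
      _ = G.edist u v := by
          rw [SimpleGraph.dist]
          exact ENat.coe_toNat (SimpleGraph.edist_ne_top_iff_reachable.mpr (hG u v))
      _ ≤ G.ediam := SimpleGraph.edist_le_ediam
  exact ENat.toNat_le_toNat hediam hnetop
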